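/- For two symmetric simplicial sets Σ^α and Σ^μ, the fundamental groupoid of the product simplicial set Σ^α × Σ^μ is isomorphic to the product of the fundamental groupoids: π₁(Σ^α × Σ^μ) ≅ π₁(Σ^α) × π₁(Σ^μ). Concretely: two paths (p^α, p^μ) and (q^α, q^μ) in the product, with ℓ(p^α)=ℓ(p^μ) and ℓ(q^α)=ℓ(q^μ), are homotopic in the product if and only if p^α ∼ q^α and p^μ ∼ q^μ componentwise. -/

import Mathlib

/-- A (truncated) symmetric simplicial set: vertices, edges and triangles with face maps,
the degeneracy `σ₀` on vertices, and the two degeneracies of edges witnessing that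
degenerate edges can be inserted (these exist in any symmetric simplicial set). -/
structure SymSSet where
  V : Type
  E : Type
  T : Type
  d0 : E → V
  d1 : E → V
  s : V → E
  s_d0 : ∀ v, d0 (s v) = v
  s_d1 : ∀ v, d1 (s v) = v
  f0 : T → E
  f1 : T → E
  f2 : T → E
  c00 : ∀ t, d0 (f0 t) = d0 (f1 t)
  c01 : ∀ t, d1 (f0 t) = d0 (f2 t)
  c11 : ∀ t, d1 (f1 t) = d1 (f2 t)
  degL : E → T
  degL_f0 : ∀ e, f0 (degL e) = s (d0 e)
  degL_f1 : ∀ e, f1 (degL e) = e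
  degL_f2 : ∀ e, f2 (degL e) = e
  degR : E → T
  degR_f0 : ∀ e, f0 (degR e) = e
  degR_f1 : ∀ e, f1 (degR e) = e
  degR_f2 : ∀ e, f2 (degR e) = s (d1 e)

/-- Composability of a word of 1-simplices (leftmost = last edge): `∂₁bᵢ₊₁ = ∂₀bᵢ`. -/
def SymSSet.Composable (S : SymSSet) : List S.E → Prop
  | [] => True
  | [_] => True
  | b :: b' :: t => S.d1 b = S.d0 b' ∧ S.Composable (b' :: t)

/-- Elementary deformation: replace a face `∂₁c` by the pair `∂₀c, ∂₂c` (ampliation), or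
conversely (contraction, via symmetry of the generated equivalence relation). -/
inductive SymSSet.Step (S : SymSSet) : List S.E → List S.E → Prop
  | ampl (l₁ l₂ : List S.E) (c : S.T) :
      SymSSet.Step S (l₁ ++ S.f1 c :: l₂) (l₁ ++ S.f0 c :: S.f2 c :: l₂)

/-- Homotopy of paths: the equivalence relation generated by elementary deformations. -/
def SymSSet.Homotopic (S : SymSSet) (p q : List S.E) : Prop :=
  Relation.EqvGen (SymSSet.Step S) p q

/-- The product of two symmetric simplicial sets. -/
def SymSSet.prod (S T : SymSSet) : SymSSet where
  V := S.V × T.V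
  E := S.E × T.E
  T := S.T × T.T
  d0 e := (S.d0 e.1, T.d0 e.2)
  d1 e := (S.d1 e.1, T.d1 e.2)
  s v := (S.s v.1, T.s v.2)
  s_d0 v := by simp [S.s_d0, T.s_d0]
  s_d1 v := by simp [S.s_d1, T.s_d1]
  f0 t := (S.f0 t.1, T.f0 t.2)
  f1 t := (S.f1 t.1, T.f1 t.2)
  f2 t := (S.f2 t.1, T.f2 t.2)
  c00 t := by simp [S.c00, T.c00]
  c01 t := by simp [S.c01, T.c01]
  c11 t := by simp [S.c11, T.c11]
  degL e := (S.degL e.1, T.degL e.2)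
  degL_f0 e := by simp [S.degL_f0, T.degL_f0]
  degL_f1 e := by simp [S.degL_f1, T.degL_f1]
  degL_f2 e := by simp [S.degL_f2, T.degL_f2]
  degR e := (S.degR e.1, T.degR e.2)
  degR_f0 e := by simp [S.degR_f0, T.degR_f0]
  degR_f1 e := by simp [S.degR_f1, T.degR_f1]
  degR_f2 e := by simp [S.degR_f2, T.degR_f2]
namespace SymSSet
variable {S T : SymSSet}

theorem homotopic_append_left (m : List S.E) {p q : List S.E} (h : S.Homotopic p q) :
    S.Homotopic (m ++ p) (m ++ q) := by
  induction h with
  | rel a b hab =>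
    cases hab with
    | ampl l₁ l₂ c =>
      refine Relation.EqvGen.rel _ _ ?_
      rw [← List.append_assoc, ← List.append_assoc]
      exact Step.ampl (m ++ l₁) l₂ c
  | refl a => exact Relation.EqvGen.refl _
  | symm a b _ ih => exact Relation.EqvGen.symm _ _ ih
  | trans a b c _ _ ih1 ih2 => exact Relation.EqvGen.trans _ _ _ ih1 ih2

theorem homotopic_append_right {p q : List S.E} (h : S.Homotopic p q) (k : List S.E) :
    S.Homotopic (p ++ k) (q ++ k) := by
  induction h with
  | rel a b hab =>
    cases hab with
    | ampl l₁ l₂ c =>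
      refine Relation.EqvGen.rel _ _ ?_
      simp only [List.cons_append, List.append_assoc]
      exact Step.ampl l₁ (l₂ ++ k) c
  | refl a => exact Relation.EqvGen.refl _
  | symm a b _ ih => exact Relation.EqvGen.symm _ _ ih
  | trans a b c _ _ ih1 ih2 => exact Relation.EqvGen.trans _ _ _ ih1 ih2

theorem proj_fst {p q : List (S.E × T.E)} (h : (S.prod T).Homotopic p q) :
    S.Homotopic (p.map Prod.fst) (q.map Prod.fst) := by
  induction h with
  | rel a b hab =>
    match hab with
    | .ampl l₁ l₂ c =>
      refine Relation.EqvGen.rel _ _ ?_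
      have := Step.ampl (S := S) (l₁.map Prod.fst) (l₂.map Prod.fst) c.1
      erw [List.map_append, List.map_append]
      exact this
  | refl a => exact Relation.EqvGen.refl _
  | symm a b _ ih => exact Relation.EqvGen.symm _ _ ih
  | trans a b c _ _ ih1 ih2 => exact Relation.EqvGen.trans _ _ _ ih1 ih2

theorem proj_snd {p q : List (S.E × T.E)} (h : (S.prod T).Homotopic p q) :
    T.Homotopic (p.map Prod.snd) (q.map Prod.snd) := by
  induction h with
  | rel a b hab =>
    match hab with
    | .ampl l₁ l₂ c =>
      refine Relation.EqvGen.rel _ _ ?_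
      have := Step.ampl (S := T) (l₁.map Prod.snd) (l₂.map Prod.snd) c.2
      erw [List.map_append, List.map_append]
      exact this
  | refl a => exact Relation.EqvGen.refl _
  | symm a b _ ih => exact Relation.EqvGen.symm _ _ ih
  | trans a b c _ _ ih1 ih2 => exact Relation.EqvGen.trans _ _ _ ih1 ih2

theorem lift_fst {a b : List S.E} (h : S.Homotopic a b) (w : T.V) :
    (S.prod T).Homotopic (a.map fun e => (e, T.s w)) (b.map fun e => (e, T.s w)) := by
  induction h with
  | rel a b hab =>
    cases hab with
    | ampl l₁ l₂ c =>
      refine Relation.EqvGen.rel _ _ ?_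
      have := Step.ampl (S := S.prod T) (l₁.map fun e => (e, T.s w))
        (l₂.map fun e => (e, T.s w)) (c, T.degR (T.s w))
      simp [SymSSet.prod, T.degR_f0, T.degR_f1, T.degR_f2, T.s_d1] at this ⊢
      exact this
  | refl a => exact Relation.EqvGen.refl _
  | symm a b _ ih => exact Relation.EqvGen.symm _ _ ih
  | trans a b c _ _ ih1 ih2 => exact Relation.EqvGen.trans _ _ _ ih1 ih2

theorem lift_snd {a b : List T.E} (h : T.Homotopic a b) (v : S.V) :
    (S.prod T).Homotopic (a.map fun e => (S.s v, e)) (b.map fun e => (S.s v, e)) := by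
  induction h with
  | rel a b hab =>
    cases hab with
    | ampl l₁ l₂ c =>
      refine Relation.EqvGen.rel _ _ ?_
      have := Step.ampl (S := S.prod T) (l₁.map fun e => (S.s v, e))
        (l₂.map fun e => (S.s v, e)) (S.degR (S.s v), c)
      simp [SymSSet.prod, S.degR_f0, S.degR_f1, S.degR_f2, S.s_d1] at this ⊢
      exact this
  | refl a => exact Relation.EqvGen.refl _
  | symm a b _ ih => exact Relation.EqvGen.symm _ _ ih
  | trans a b c _ _ ih1 ih2 => exact Relation.EqvGen.trans _ _ _ ih1 ih2

theorem composable_fst : ∀ {l : List (S.E × T.E)}, (S.prod T).Composable l →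
    S.Composable (l.map Prod.fst)
  | [], _ => trivial
  | [_], _ => trivial
  | a :: b :: t, h => by
    simp only [SymSSet.Composable, SymSSet.prod, Prod.mk.injEq] at h
    exact ⟨h.1.1, composable_fst h.2⟩

theorem hom_ends {p q : List S.E} (h : S.Homotopic p q) :
    p.head?.map S.d0 = q.head?.map S.d0 ∧ p.getLast?.map S.d1 = q.getLast?.map S.d1 := by
  induction h with
  | rel a b hab =>
    cases hab with
    | ampl l₁ l₂ c =>
      constructor
      · cases l₁ with
        | nil => simp [S.c00 c]
        | cons a l => simp
      · rcases l₂.eq_nil_or_concat with rfl | ⟨l₂', a, rfl⟩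
        · have e1 : l₁ ++ [S.f1 c] = l₁ ++ [S.f1 c] := rfl
          have e2 : l₁ ++ S.f0 c :: [S.f2 c] = (l₁ ++ [S.f0 c]) ++ [S.f2 c] := by simp
          rw [e2, List.getLast?_concat, List.getLast?_concat]
          simp [S.c11 c]
        · simp only [List.concat_eq_append]
          have e1 : l₁ ++ S.f1 c :: (l₂' ++ [a]) = (l₁ ++ S.f1 c :: l₂') ++ [a] := by simp
          have e2 : l₁ ++ S.f0 c :: S.f2 c :: (l₂' ++ [a])
              = (l₁ ++ S.f0 c :: S.f2 c :: l₂') ++ [a] := by simp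
          rw [e1, e2, List.getLast?_concat, List.getLast?_concat]
  | refl a => exact ⟨rfl, rfl⟩
  | symm a b _ ih => exact ⟨ih.1.symm, ih.2.symm⟩
  | trans a b c _ _ ih1 ih2 => exact ⟨ih1.1.trans ih2.1, ih1.2.trans ih2.2⟩

end SymSSet
namespace SymSSet
variable {S T : SymSSet}

/-- Exchange step, first half: split a product edge into "T part then S-degenerate". -/
theorem step_splitL (x : S.E) (y : T.E) (l₂ : List (S.E × T.E)) :
    (S.prod T).Step ((x, y) :: l₂) ((S.s (S.d0 x), y) :: (x, T.s (T.d1 y)) :: l₂) := by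
  have := Step.ampl (S := S.prod T) [] l₂ (S.degL x, T.degR y)
  simp [SymSSet.prod, S.degL_f0, S.degL_f1, S.degL_f2, T.degR_f0, T.degR_f1, T.degR_f2] at this ⊢
  exact this

/-- Exchange step, second half: split a product edge into "S part then T-degenerate". -/
theorem step_splitR (x : S.E) (y : T.E) (l₂ : List (S.E × T.E)) :
    (S.prod T).Step ((x, y) :: l₂) ((x, T.s (T.d0 y)) :: (S.s (S.d1 x), y) :: l₂) := by
  have := Step.ampl (S := S.prod T) [] l₂ (S.degR x, T.degL y)
  simp [SymSSet.prod, S.degR_f0, S.degR_f1, S.degR_f2, T.degL_f0, T.degL_f1, T.degL_f2] at this ⊢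
  exact this

/-- Push a "vertical" edge (degenerate in the first component) through a block of
edges which are degenerate in the second component. -/
theorem push (y : T.E) : ∀ (r : List S.E) (x : S.E), S.Composable (x :: r) →
    ∀ v : S.V, S.d1 ((x :: r).getLast (List.cons_ne_nil _ _)) = v →
    (S.prod T).Homotopic ((S.s (S.d0 x), y) :: (x :: r).map (fun e => (e, T.s (T.d1 y))))
      ((x :: r).map (fun e => (e, T.s (T.d0 y))) ++ [(S.s v, y)]) := by
  intro r
  induction r with
  | nil =>
    intro x _ v hv
    simp only [List.getLast_singleton] at hv
    subst hv
    refine Relation.EqvGen.trans _ [(x, y)] _ ?_ ?_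
    · exact Relation.EqvGen.symm _ _ (Relation.EqvGen.rel _ _ (step_splitL x y []))
    · exact Relation.EqvGen.rel _ _ (step_splitR x y [])
  | cons x' r' ih =>
    intro x hc v hv
    simp only [SymSSet.Composable] at hc
    rw [List.getLast_cons (List.cons_ne_nil _ _)] at hv
    set A := (x' :: r').map (fun e => (e, T.s (T.d1 y))) with hA
    -- LHS = (s(d0 x), y) :: (x, s(d1 y)) :: A
    refine Relation.EqvGen.trans _ ((x, T.s (T.d0 y)) :: (S.s (S.d1 x), y) :: A) _ ?_ ?_
    · refine Relation.EqvGen.trans _ ((x, y) :: A) _ ?_ ?_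
      · exact Relation.EqvGen.symm _ _ (Relation.EqvGen.rel _ _ (step_splitL x y A))
      · exact Relation.EqvGen.rel _ _ (step_splitR x y A)
    · rw [hc.1]
      have := homotopic_append_left [(x, T.s (T.d0 y))] (ih x' hc.2 v hv)
      exact this

/-- Staircase lemma: a product path is homotopic to "first component at constant end value
of the second, then second component at constant start value of the first". -/
theorem stair : ∀ (p : List (S.E × T.E)) (z : S.E × T.E), (S.prod T).Composable (z :: p) →
    ∀ v : S.V, S.d1 (((z :: p).getLast (List.cons_ne_nil _ _)).1) = v →
    (S.prod T).Homotopic (z :: p)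
      ((z :: p).map (fun u => (u.1, T.s (T.d0 z.2))) ++ (z :: p).map (fun u => (S.s v, u.2))) := by
  intro p
  induction p with
  | nil =>
    intro z _ v hv
    simp only [List.getLast_singleton] at hv
    subst hv
    exact Relation.EqvGen.rel _ _ (step_splitR z.1 z.2 [])
  | cons z' r ih =>
    intro z hc v hv
    have hzz' : S.d1 z.1 = S.d0 z'.1 ∧ T.d1 z.2 = T.d0 z'.2 := by
      have h1 := hc.1
      simp only [SymSSet.prod, Prod.ext_iff] at h1
      exact h1
    have hc2 : (S.prod T).Composable (z' :: r) := hc.2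
    rw [List.getLast_cons (List.cons_ne_nil _ _)] at hv
    have H1 := ih z' hc2 v hv
    -- step a : prepend z
    refine Relation.EqvGen.trans _
      (z :: ((z' :: r).map (fun u => (u.1, T.s (T.d0 z'.2)))
        ++ (z' :: r).map (fun u => (S.s v, u.2)))) _ ?_ ?_
    · exact homotopic_append_left [z] H1
    -- step b : split the head edge
    refine Relation.EqvGen.trans _
      ((z.1, T.s (T.d0 z.2)) :: (S.s (S.d1 z.1), z.2) ::
        ((z' :: r).map (fun u => (u.1, T.s (T.d0 z'.2)))
          ++ (z' :: r).map (fun u => (S.s v, u.2)))) _ ?_ ?_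
    · exact Relation.EqvGen.rel _ _ (step_splitR z.1 z.2 _)
    -- step c : push the vertical edge through the first block
    · have hcomp : S.Composable (z'.1 :: r.map Prod.fst) := composable_fst hc2
      have hv' : S.d1 ((z'.1 :: r.map Prod.fst).getLast (List.cons_ne_nil _ _)) = v := by
        rw [show (z'.1 :: r.map Prod.fst).getLast (List.cons_ne_nil _ _)
            = ((z' :: r).map Prod.fst).getLast (by simp) from by congr 1,
          List.getLast_map]
        exact hv
      have HP := push z.2 (r.map Prod.fst) z'.1 hcomp v hv'
      -- rewrite HP's lists into the needed shape
      have e1 : (z'.1 :: r.map Prod.fst).map (fun e => (e, T.s (T.d1 z.2)))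
          = (z' :: r).map (fun u => (u.1, T.s (T.d0 z'.2))) := by
        rw [hzz'.2]; simp [List.map_map, Function.comp]
      have e2 : (z'.1 :: r.map Prod.fst).map (fun e => (e, T.s (T.d0 z.2)))
          = (z' :: r).map (fun u => (u.1, T.s (T.d0 z.2))) := by
        simp [List.map_map, Function.comp]
      erw [e1, e2, ← hzz'.1] at HP
      have HP2 := homotopic_append_left [(z.1, T.s (T.d0 z.2))]
        (homotopic_append_right HP ((z' :: r).map (fun u => (S.s v, u.2))))
      erw [List.cons_append, List.append_assoc] at HP2
      exact HP2

end SymSSet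
/-- The fundamental groupoid of a product of symmetric simplicial sets is the product of the
fundamental groupoids. Concretely: two (nonempty, composable) paths in the product simplicial
set are homotopic if and only if their two components are homotopic. -/
theorem stmt6 (S T : SymSSet) (p q : List (SymSSet.prod S T).E)
    (hp : p ≠ []) (hq : q ≠ [])
    (hpc : (SymSSet.prod S T).Composable p) (hqc : (SymSSet.prod S T).Composable q) :
    (SymSSet.prod S T).Homotopic p q ↔
      S.Homotopic (p.map Prod.fst) (q.map Prod.fst) ∧
        T.Homotopic (p.map Prod.snd) (q.map Prod.snd) := by
  constructor
  · intro h
    exact ⟨SymSSet.proj_fst h, SymSSet.proj_snd h⟩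
  · rintro ⟨h1, h2⟩
    obtain ⟨zp, p', rfl⟩ : ∃ z l, p = z :: l := by
      cases p with
      | nil => exact absurd rfl hp
      | cons a l => exact ⟨a, l, rfl⟩
    obtain ⟨zq, q', rfl⟩ : ∃ z l, q = z :: l := by
      cases q with
      | nil => exact absurd rfl hq
      | cons a l => exact ⟨a, l, rfl⟩
    set w : T.V := T.d0 zp.2 with hw
    set v : S.V := S.d1 (((zp :: p').getLast (List.cons_ne_nil _ _)).1) with hv
    -- endpoint equalities transported through the homotopies
    have hwq : T.d0 zq.2 = w := by
      have := (SymSSet.hom_ends h2).1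
      exact Option.some.inj this.symm
    have hvq : S.d1 (((zq :: q').getLast (List.cons_ne_nil _ _)).1) = v := by
      have hE := (SymSSet.hom_ends h1).2
      erw [List.getLast?_map, List.getLast?_map] at hE
      erw [List.getLast?_eq_getLast (List.cons_ne_nil _ _),
        List.getLast?_eq_getLast (List.cons_ne_nil _ _)] at hE
      simp only [Option.map_some] at hE
      exact (Option.some.inj hE).symm
    have SP := SymSSet.stair (p := p') zp hpc v rfl
    have SQ := SymSSet.stair (p := q') zq hqc v hvq
    rw [hwq] at SQ
    refine Relation.EqvGen.trans _ _ _ SP ?_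
    refine Relation.EqvGen.trans _
      (((zq :: q').map (fun u => (u.1, T.s w))) ++ ((zp :: p').map (fun u => (S.s v, u.2)))) _ ?_ ?_
    · have L := SymSSet.lift_fst h1 w
      have e1 : ((zp :: p').map Prod.fst).map (fun e => (e, T.s w))
          = (zp :: p').map (fun u => (u.1, T.s w)) := by exact List.map_map ..
      have e2 : ((zq :: q').map Prod.fst).map (fun e => (e, T.s w))
          = (zq :: q').map (fun u => (u.1, T.s w)) := by exact List.map_map ..
      erw [e1, e2] at L
      exact SymSSet.homotopic_append_right L _
    · refine Relation.EqvGen.trans _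
        (((zq :: q').map (fun u => (u.1, T.s w))) ++ ((zq :: q').map (fun u => (S.s v, u.2)))) _ ?_ ?_
      · have L := SymSSet.lift_snd h2 v
        have e1 : ((zp :: p').map Prod.snd).map (fun e => (S.s v, e))
            = (zp :: p').map (fun u => (S.s v, u.2)) := by exact List.map_map ..
        have e2 : ((zq :: q').map Prod.snd).map (fun e => (S.s v, e))
            = (zq :: q').map (fun u => (S.s v, u.2)) := by exact List.map_map ..
        erw [e1, e2] at L
        exact SymSSet.homotopic_append_left _ L
      · exact Relation.EqvGen.symm _ _ SQ
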